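/- Let P be a probability measure on ℝ, τ ∈ (0,1), and q < 0. Then ∫_ℝ (ρ_τ(x - q) - ρ_τ(x)) dP(x) = -τ·q - ∫_{(q,0]} F(x) dx, where F is the CDF of P. -/

import Mathlib

open MeasureTheory

noncomputable def rho (τ : ℝ) (x : ℝ) : ℝ := if x ≤ 0 then (τ - 1) * x else τ * x

noncomputable def cdf' (P : Measure ℝ) (x : ℝ) : ℝ := (P (Set.Iic x)).toReal
noncomputable def primF (P : Measure ℝ) (x : ℝ) : ℝ := ∫ u in (0:ℝ)..x, cdf' P u

noncomputable def gaux (q x : ℝ) : ℝ := if x ≤ q then q else if x ≤ 0 then x else 0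

lemma gaux_meas (q : ℝ) : Measurable (gaux q) := by
  unfold gaux
  exact Measurable.ite measurableSet_Iic measurable_const
    (Measurable.ite measurableSet_Iic measurable_id measurable_const)

lemma gaux_nonpos (q x : ℝ) (hq : q < 0) : gaux q x ≤ 0 := by
  unfold gaux; split_ifs <;> linarith

lemma gaux_bound (q x : ℝ) (hq : q < 0) : ‖gaux q x‖ ≤ -q := by
  rw [Real.norm_eq_abs, abs_le]
  unfold gaux; split_ifs <;> constructor <;> linarith

lemma rho_diff (τ q x : ℝ) (hq : q < 0) :
    rho τ (x - q) - rho τ x = -τ * q + gaux q x := by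
  unfold rho gaux
  rcases le_or_gt x q with h1 | h1
  · rw [if_pos h1, if_pos (by linarith : x - q ≤ 0), if_pos (by linarith : x ≤ 0)]; ring
  · rw [if_neg (not_le.2 h1), if_neg (by simp only [not_le]; linarith : ¬ x - q ≤ 0)]
    rcases le_or_gt x 0 with h2 | h2
    · rw [if_pos h2, if_pos h2]; ring
    · rw [if_neg (not_le.2 h2), if_neg (not_le.2 h2)]; ring

lemma restrict_Ici (q x : ℝ) (hq : q < 0) :
    (volume.restrict (Set.Ioc q 0)) (Set.Ici x) = ENNReal.ofReal (-(gaux q x)) := by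
  rw [Measure.restrict_apply measurableSet_Ici]
  unfold gaux
  split_ifs with h1 h2
  · have : Set.Ici x ∩ Set.Ioc q 0 = Set.Ioc q 0 := by
      apply Set.inter_eq_right.2
      intro t ht
      exact le_trans h1 ht.1.le
    rw [this, Real.volume_Ioc]
    norm_num
  · have : Set.Ici x ∩ Set.Ioc q 0 = Set.Icc x 0 := by
      ext t
      simp only [Set.mem_inter_iff, Set.mem_Ici, Set.mem_Ioc, Set.mem_Icc]
      constructor
      · rintro ⟨h, _, h3⟩; exact ⟨h, h3⟩
      · rintro ⟨h, h3⟩; push_neg at h1; exact ⟨h, lt_of_lt_of_le h1 h, h3⟩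
    rw [this, Real.volume_Icc]
    norm_num
  · have : Set.Ici x ∩ Set.Ioc q 0 = ∅ := by
      ext t
      simp only [Set.mem_inter_iff, Set.mem_Ici, Set.mem_Ioc, Set.mem_empty_iff_false,
        iff_false, not_and]
      intro h _
      push_neg at h2
      simp only [not_le]
      linarith
    rw [this]
    simp

theorem stmt8 (P : Measure ℝ) [IsProbabilityMeasure P] (τ : ℝ) (hτ : τ ∈ Set.Ioo (0:ℝ) 1)
    (q : ℝ) (hq : q < 0) :
    ∫ x, (rho τ (x - q) - rho τ x) ∂P = -τ * q - ∫ x in Set.Ioc q (0:ℝ), cdf' P x := by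
  have hgint : Integrable (gaux q) P := by
    refine (integrable_const (-q)).mono' (gaux_meas q).aestronglyMeasurable ?_
    exact ae_of_all _ fun x => gaux_bound q x hq
  -- LHS
  have hL : ∫ x, (rho τ (x - q) - rho τ x) ∂P = -τ * q + ∫ x, gaux q x ∂P := by
    have : ∀ x, rho τ (x - q) - rho τ x = -τ * q + gaux q x := fun x => rho_diff τ q x hq
    rw [integral_congr_ae (ae_of_all _ this), integral_add (integrable_const _) hgint,
      integral_const]
    simp
  -- Fubini part
  have hmono : Monotone (fun t => P (Set.Iic t)) :=
    fun a b hab => measure_mono (Set.Iic_subset_Iic.2 hab)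
  have hmeas : Measurable (fun t => P (Set.Iic t)) := hmono.measurable
  have hs : MeasurableSet {p : ℝ × ℝ | p.2 ≤ p.1} := measurableSet_le measurable_snd measurable_fst
  have hA : ∫⁻ t in Set.Ioc q 0, P (Set.Iic t) ∂volume
      = ((volume.restrict (Set.Ioc q 0)).prod P) {p : ℝ × ℝ | p.2 ≤ p.1} := by
    rw [Measure.prod_apply hs]
    rfl
  have hB : ((volume.restrict (Set.Ioc q 0)).prod P) {p : ℝ × ℝ | p.2 ≤ p.1}
      = ∫⁻ x, (volume.restrict (Set.Ioc q 0)) (Set.Ici x) ∂P := by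
    rw [Measure.prod_apply_symm hs]
    rfl
  have hC : ∫⁻ x, (volume.restrict (Set.Ioc q 0)) (Set.Ici x) ∂P
      = ∫⁻ x, ENNReal.ofReal (-(gaux q x)) ∂P := by
    congr 1; ext x; exact restrict_Ici q x hq
  have hR1 : ∫ x in Set.Ioc q 0, cdf' P x = (∫⁻ t in Set.Ioc q 0, P (Set.Iic t) ∂volume).toReal := by
    rw [← integral_toReal (hmeas.aemeasurable.restrict)
      (ae_of_all _ fun t => measure_lt_top P _)]
    rfl
  have hR2 : ∫ x, (-(gaux q x)) ∂P = (∫⁻ x, ENNReal.ofReal (-(gaux q x)) ∂P).toReal := by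
    rw [integral_eq_lintegral_of_nonneg_ae (f := fun x => -(gaux q x))
      (ae_of_all _ fun x => by simpa using gaux_nonpos q x hq)
      ((gaux_meas q).neg.aestronglyMeasurable)]
  have hR : ∫ x in Set.Ioc q 0, cdf' P x = - ∫ x, gaux q x ∂P := by
    rw [hR1, hA, hB, hC, ← hR2, integral_neg]
  rw [hL, hR]
  ring
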